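/- Fix node i and the coupled map h_h(Y) = ÃY_hÃᵀ + d_h∑_{j∈N_h}G̃Y_jG̃ᵀ + Q_h. Let Z⁰ and Z¹ be two trajectories defined recursively on l = k−τ_i,…,k by Z_{l,h} = P_h if l ≤ k−τ_h and Z_{l,h} = h_h(Z_{l−1}) otherwise. If at the initial time Z^0_{k−τ_i,i} ≤ Z^1_{k−τ_i,i} and Z^0_{k−τ_i,j} = Z^1_{k−τ_i,j} for all j ≠ i, then Z^0_{k,h} ≤ Z^1_{k,h} for all h = 1,…,N. -/

import Mathlib

set_option maxHeartbeats 1000000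


open Matrix
open scoped BigOperators

lemma psd_smul {n : ℕ} {c : ℝ} (hc : 0 ≤ c) {M : Matrix (Fin n) (Fin n) ℝ}
    (hM : M.PosSemidef) : (c • M).PosSemidef := by
  refine ⟨?_, fun x => ?_⟩
  · unfold Matrix.IsHermitian
    rw [Matrix.conjTranspose_smul, hM.1.eq]
    simp
  · exact (hM.smul hc).2 x

lemma psd_conj {n : ℕ} {M : Matrix (Fin n) (Fin n) ℝ} (hM : M.PosSemidef)
    (A : Matrix (Fin n) (Fin n) ℝ) : (A * M * Aᵀ).PosSemidef := by
  have := hM.mul_mul_conjTranspose_same A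
  simpa using this

/-- Lemma 5 of the paper: a monotone perturbation at a single node `i` at time `k − τᵢ`
propagates monotonically through the coupled covariance recursion up to time `k`. -/
theorem coupled_trajectory_monotone {n N : ℕ}
    (At Gt : Matrix (Fin n) (Fin n) ℝ)
    (Q Pst : Fin N → Matrix (Fin n) (Fin n) ℝ)
    (hQ : ∀ h, (Q h).PosSemidef) (hPst : ∀ h, (Pst h).PosSemidef)
    (Nbr : Fin N → Finset (Fin N))
    (τ : Fin N → ℕ) (k : ℕ) (hτ : ∀ h, τ h ≤ k)
    (i : Fin N)
    (Z0 Z1 : ℕ → Fin N → Matrix (Fin n) (Fin n) ℝ)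
    (hZ0 : ∀ l, k - τ i < l → l ≤ k → ∀ h, Z0 l h =
      if l ≤ k - τ h then Pst h
      else At * Z0 (l - 1) h * Atᵀ
        + ((Nbr h).card : ℝ) • ∑ j ∈ Nbr h, Gt * Z0 (l - 1) j * Gtᵀ + Q h)
    (hZ1 : ∀ l, k - τ i < l → l ≤ k → ∀ h, Z1 l h =
      if l ≤ k - τ h then Pst h
      else At * Z1 (l - 1) h * Atᵀ
        + ((Nbr h).card : ℝ) • ∑ j ∈ Nbr h, Gt * Z1 (l - 1) j * Gtᵀ + Q h)
    (hinit_i : (Z1 (k - τ i) i - Z0 (k - τ i) i).PosSemidef)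
    (hinit_ne : ∀ j : Fin N, j ≠ i → Z0 (k - τ i) j = Z1 (k - τ i) j) :
    ∀ h, (Z1 k h - Z0 k h).PosSemidef := by
  have key : ∀ l, k - τ i ≤ l → l ≤ k → ∀ h, (Z1 l h - Z0 l h).PosSemidef := by
    intro l hl
    induction l, hl using Nat.le_induction with
    | base =>
      intro _ h
      by_cases hhi : h = i
      · subst hhi; exact hinit_i
      · rw [hinit_ne h hhi, sub_self]; exact Matrix.PosSemidef.zero
    | succ l hl IH =>
      intro hlk h
      have hlk' : l ≤ k := Nat.le_of_succ_le hlk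
      have hlt : k - τ i < l + 1 := Nat.lt_succ_of_le hl
      rw [hZ0 (l+1) hlt hlk h, hZ1 (l+1) hlt hlk h]
      by_cases hc : l + 1 ≤ k - τ h
      · simp [hc, Matrix.PosSemidef.zero]
      · simp only [if_neg hc, Nat.add_sub_cancel]
        have heq :
            (At * Z1 l h * Atᵀ + ((Nbr h).card : ℝ) • ∑ j ∈ Nbr h, Gt * Z1 l j * Gtᵀ + Q h)
              - (At * Z0 l h * Atᵀ + ((Nbr h).card : ℝ) • ∑ j ∈ Nbr h, Gt * Z0 l j * Gtᵀ + Q h)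
            = At * (Z1 l h - Z0 l h) * Atᵀ
              + ((Nbr h).card : ℝ) • ∑ j ∈ Nbr h, Gt * (Z1 l j - Z0 l j) * Gtᵀ := by
          simp only [Matrix.mul_sub, Matrix.sub_mul, Finset.sum_sub_distrib, smul_sub]
          abel
        rw [heq]
        have h1 : (At * (Z1 l h - Z0 l h) * Atᵀ).PosSemidef :=
          psd_conj (IH hlk' h) At
        have h2 : (∑ j ∈ Nbr h, Gt * (Z1 l j - Z0 l j) * Gtᵀ).PosSemidef := by
          apply Finset.sum_induction _ _ (fun a b ha hb => ha.add hb) Matrix.PosSemidef.zero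
          intro j _
          exact psd_conj (IH hlk' j) Gt
        exact h1.add (psd_smul (by positivity) h2)
  exact key k (Nat.sub_le k (τ i)) le_rfl
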